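/- Every H-supplemented module is FI-lifting: for every fully invariant submodule N of M there exists a direct summand K of M with K ≤ N and N/K ≪ M/K. -/

import Mathlib

universe u v

/-- `N` is a small (superfluous) submodule of `M`. -/
def SmallSub (R : Type v) [Ring R] {M : Type u} [AddCommGroup M] [Module R M]
    (N : Submodule R M) : Prop :=
  ∀ X : Submodule R M, N ⊔ X = ⊤ → X = ⊤

/-- `D` is a direct summand of `M`. -/
def IsDirectSummand (R : Type v) [Ring R] {M : Type u} [AddCommGroup M] [Module R M]
    (D : Submodule R M) : Prop :=
  ∃ D' : Submodule R M, IsCompl D D'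

/-- `M` is H-supplemented: for every submodule `X` there is a direct summand `D`
with `(X+D)/D ≪ M/D` and `(X+D)/X ≪ M/X`. -/
def HSupplemented (R : Type v) [Ring R] (M : Type u) [AddCommGroup M] [Module R M] : Prop :=
  ∀ X : Submodule R M, ∃ D : Submodule R M, IsDirectSummand R D ∧
    SmallSub R ((X ⊔ D).map D.mkQ) ∧ SmallSub R ((X ⊔ D).map X.mkQ)

/-- Condition (D3). -/
def CondD3 (R : Type v) [Ring R] (M : Type u) [AddCommGroup M] [Module R M] : Prop :=
  ∀ K L : Submodule R M, IsDirectSummand R K → IsDirectSummand R L → K ⊔ L = ⊤ →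
    IsDirectSummand R (K ⊓ L)

/-- `N` is a fully invariant submodule of `M`. -/
def FullyInvariant (R : Type v) [Ring R] {M : Type u} [AddCommGroup M] [Module R M]
    (N : Submodule R M) : Prop :=
  ∀ f : M →ₗ[R] M, N.map f ≤ N

theorem stmt10 {R : Type v} [Ring R] {M : Type u} [AddCommGroup M] [Module R M]
    (hH : HSupplemented R M) :
    ∀ N : Submodule R M, FullyInvariant R N →
      ∃ K : Submodule R M, IsDirectSummand R K ∧ K ≤ N ∧ SmallSub R (N.map K.mkQ) := by
  intro N hFI
  obtain ⟨D, ⟨D', hc⟩, hD, hNsmall⟩ := hH N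
  -- First: N ⊔ D' = ⊤, from the smallness of (N ⊔ D)/N in M/N.
  have htop : N ⊔ D' = ⊤ := by
    have h1 : ((N ⊔ D).map N.mkQ) ⊔ (D'.map N.mkQ) = ⊤ := by
      rw [← Submodule.map_sup]
      have hsup : N ⊔ D ⊔ D' = ⊤ := by
        rw [sup_assoc, hc.sup_eq_top, sup_top_eq]
      rw [hsup, Submodule.map_top, Submodule.range_mkQ]
    have h2 := hNsmall _ h1
    rw [eq_top_iff]
    rintro x -
    have hx : N.mkQ x ∈ Submodule.map N.mkQ D' := by rw [h2]; trivial
    obtain ⟨d', hd', hxd⟩ := hx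
    have hsub : x - d' ∈ N := by
      rw [← Submodule.Quotient.eq N]
      exact hxd.symm
    have : x = (x - d') + d' := by abel
    rw [this]
    exact Submodule.add_mem_sup hsub hd'
  -- The projection onto D along D'.
  set e : M →ₗ[R] M := D.subtype.comp (D.projectionOnto D' hc) with he
  have he_left : ∀ d ∈ D, e d = d := by
    intro d hd
    have := Submodule.linearProjOfIsCompl_apply_left hc ⟨d, hd⟩
    simp [he, this]
  have he_right : ∀ x ∈ D', e x = 0 := by
    intro x hx
    have := Submodule.linearProjOfIsCompl_apply_right hc ⟨x, hx⟩
    simp [he, this]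
  -- D ≤ N.
  have hDN : D ≤ N := by
    intro d hd
    have hdm : d ∈ N ⊔ D' := htop ▸ Submodule.mem_top
    obtain ⟨n, hn, d', hd', rfl⟩ := Submodule.mem_sup.mp hdm
    have h1 : e (n + d') = n + d' := he_left _ hd
    have h2 : e (n + d') = e n := by
      rw [map_add, he_right d' hd', add_zero]
    have : n + d' = e n := h1 ▸ h2
    rw [this]
    exact hFI e ⟨n, hn, rfl⟩
  refine ⟨D, ⟨D', hc⟩, hDN, ?_⟩
  have : N ⊔ D = N := sup_eq_left.mpr hDN
  rwa [this] at hD
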